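/- Let $M$ be a finite set of $n$ nonzero vectors $a_1,\dots,a_n$ spanning $\mathbb{R}^d$, and let $\Delta(M)$ be the simplicial complex of subsets $I\subseteq\{1,\dots,n\}$ such that $\{a_i : i\in I\}$ is linearly independent. Let $\chi(M)=\sum_{I\in\Delta(M)}(-1)^{|I|}$ (including the empty set with sign $+1$). Then $|\chi(M)|\le\binom{n-1}{d}$. -/

import Mathlib

open Finset Submodule Module

section Aux

variable {ι : Type} [DecidableEq ι] {V : Type} [AddCommGroup V] [Module ℝ V]

private lemma indep_iff (a : ι → V) (I : Finset ι) :
    LinearIndependent ℝ (fun i : I => a i.1) ↔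
      ∀ c : ι → ℝ, ∑ i ∈ I, c i • a i = 0 → ∀ i ∈ I, c i = 0 := by
  classical
  rw [Fintype.linearIndependent_iff]
  constructor
  · intro h c hc i hi
    exact h (fun j => c j)
      (by rw [← Finset.sum_coe_sort I (fun i => c i • a i)] at hc; exact hc) ⟨i, hi⟩
  · intro h g hg j
    have := h (fun i => if hi : i ∈ I then g ⟨i, hi⟩ else 0) ?_ j.1 j.2
    · simpa using this
    · rw [← Finset.sum_coe_sort I]
      simpa using hg

private lemma indep_mono (a : ι → V) {I J : Finset ι} (hJI : J ⊆ I)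
    (hI : LinearIndependent ℝ (fun i : I => a i.1)) :
    LinearIndependent ℝ (fun i : J => a i.1) := by
  classical
  rw [indep_iff] at hI ⊢
  intro c hc i hi
  have h1 : ∑ i ∈ I, (fun i => if i ∈ J then c i else 0) i • a i
      = ∑ i ∈ J, c i • a i := by
    rw [← Finset.sum_subset hJI (by intro x _ hx; simp [hx])]
    exact Finset.sum_congr rfl (by intro x hx; simp [hx])
  have := hI (fun i => if i ∈ J then c i else 0) (by rw [h1]; exact hc) i (hJI hi)
  simpa [hi] using this

/-- Adding a vector not in the span preserves independence. -/
private lemma indep_insert (a : ι → V) {I : Finset ι} {e : ι} (hIe : e ∉ I)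
    (hsp : a e ∉ span ℝ (a '' ↑I))
    (hI : LinearIndependent ℝ (fun i : I => a i.1)) :
    LinearIndependent ℝ (fun i : ↥(insert e I) => a i.1) := by
  classical
  rw [indep_iff] at hI ⊢
  intro c hc
  rw [Finset.sum_insert hIe] at hc
  have hce : c e = 0 := by
    by_contra h0
    have hmem : c e • a e ∈ span ℝ (a '' ↑I) := by
      have : c e • a e = -∑ i ∈ I, c i • a i := by
        rw [eq_neg_iff_add_eq_zero]; exact hc
      rw [this]
      exact neg_mem (Submodule.sum_mem _ (fun i hi =>
        Submodule.smul_mem _ _ (Submodule.subset_span ⟨i, by simpa using hi, rfl⟩)))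
    have : a e ∈ span ℝ (a '' ↑I) := by
      have := Submodule.smul_mem _ (c e)⁻¹ hmem
      rwa [smul_smul, inv_mul_cancel₀ h0, one_smul] at this
    exact hsp this
  have hrest : ∀ i ∈ I, c i = 0 := by
    apply hI
    rw [hce, zero_smul, zero_add] at hc
    exact hc
  intro i hi
  rcases Finset.mem_insert.1 hi with rfl | hi
  · exact hce
  · exact hrest i hi

end Aux

open Classical in
private lemma chi_key : ∀ (k : ℕ) (V : Type) [AddCommGroup V] [Module ℝ V]
    [FiniteDimensional ℝ V] (ι : Type) [DecidableEq ι] (a : ι → V) (E : Finset ι),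
    E.card ≤ k → span ℝ (a '' ↑E) = ⊤ →
    |∑ I ∈ E.powerset,
        (if LinearIndependent ℝ (fun i : I => a i.1) then (-1 : ℤ) ^ I.card else 0)|
      ≤ ((E.card - 1).choose (finrank ℝ V) : ℤ) := by
  intro k
  induction k with
  | zero =>
    intro V _ _ _ ι _ a E hk hspan
    have hE : E = ∅ := Finset.card_eq_zero.1 (Nat.le_zero.1 hk)
    subst hE
    have hbot : (⊥ : Submodule ℝ V) = ⊤ := by
      simpa [Submodule.span_empty] using hspan
    haveI : Subsingleton V := by
      constructor
      intro x y
      have hx : x ∈ (⊥ : Submodule ℝ V) := by rw [hbot]; trivial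
      have hy : y ∈ (⊥ : Submodule ℝ V) := by rw [hbot]; trivial
      rw [Submodule.mem_bot] at hx hy
      rw [hx, hy]
    have hd : finrank ℝ V = 0 := Module.finrank_zero_of_subsingleton
    simp [hd, linearIndependent_empty_type]
  | succ k IH =>
    intro V _ _ _ ι _ a E hk hspan
    set d := finrank ℝ V with hd
    by_cases hd0 : d = 0
    · -- rank zero: only the empty set is independent
      have hcard : ∀ I ∈ E.powerset, I ≠ ∅ →
          (if LinearIndependent ℝ (fun i : I => a i.1) then (-1 : ℤ) ^ I.card else 0) = 0 := by
        intro I _ hne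
        rw [if_neg]
        intro hLI
        have := hLI.fintype_card_le_finrank
        rw [Fintype.card_coe, ← hd, hd0, Nat.le_zero] at this
        exact hne (Finset.card_eq_zero.1 this)
      rw [Finset.sum_eq_single_of_mem ∅ (Finset.empty_mem_powerset E) hcard]
      simp [hd0, linearIndependent_empty_type]
    · have hd1 : 1 ≤ d := Nat.one_le_iff_ne_zero.2 hd0
      haveI : Nontrivial V := by
        apply Module.nontrivial_of_finrank_pos (R := ℝ)
        omega
      -- find e ∈ E with a e ≠ 0
      obtain ⟨e, hE, he⟩ : ∃ e ∈ E, a e ≠ 0 := by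
        by_contra h
        push_neg at h
        have : span ℝ (a '' ↑E) ≤ ⊥ := by
          rw [Submodule.span_le]
          rintro x ⟨i, hi, rfl⟩
          simp [h i (by simpa using hi)]
        rw [hspan] at this
        obtain ⟨x, y, hxy⟩ := exists_pair_ne V
        have hx : x = 0 := by simpa using this (Submodule.mem_top (x := x))
        have hy : y = 0 := by simpa using this (Submodule.mem_top (x := y))
        exact hxy (hx.trans hy.symm)
      set F := E.erase e with hF
      have heF : e ∉ F := Finset.notMem_erase e E
      have hins : insert e F = E := Finset.insert_erase hE
      have hcardF : F.card = E.card - 1 := Finset.card_erase_of_mem hE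
      have hE1 : 1 ≤ E.card := Finset.card_pos.2 ⟨e, hE⟩
      have hFk : F.card ≤ k := by omega
      have hsplit : ∑ I ∈ E.powerset,
          (if LinearIndependent ℝ (fun i : I => a i.1) then (-1 : ℤ) ^ I.card else 0)
          = (∑ I ∈ F.powerset,
              (if LinearIndependent ℝ (fun i : I => a i.1) then (-1 : ℤ) ^ I.card else 0))
          + ∑ I ∈ F.powerset,
              (if LinearIndependent ℝ (fun i : ↥(insert e I) => a i.1)
                then (-1 : ℤ) ^ (insert e I).card else 0) := by
        conv_lhs => rw [← hins]
        exact Finset.sum_powerset_insert heF _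
      by_cases hcol : a e ∈ span ℝ (a '' ↑F)
      · -- not a coloop: deletion + contraction
        have hFspan : span ℝ (a '' ↑F) = ⊤ := by
          rw [eq_top_iff, ← hspan, Submodule.span_le]
          rintro x ⟨i, hi, rfl⟩
          rw [← hins] at hi
          simp only [Finset.coe_insert, Set.mem_insert_iff] at hi
          rcases hi with rfl | hi
          · exact hcol
          · exact Submodule.subset_span ⟨i, hi, rfl⟩
        -- F is nonempty
        have hFne : F.Nonempty := by
          by_contra h
          rw [Finset.not_nonempty_iff_eq_empty] at h
          rw [h] at hcol
          simp only [Finset.coe_empty, Set.image_empty, Submodule.span_empty,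
            Submodule.mem_bot] at hcol
          exact he hcol
        have hF1 : 1 ≤ F.card := Finset.card_pos.2 hFne
        -- contraction setup
        set S : Submodule ℝ V := span ℝ {a e} with hS
        set b : ι → V ⧸ S := fun i => S.mkQ (a i) with hb
        have hbe : b e = 0 := by
          rw [hb]
          simpa [Submodule.mkQ_apply, Submodule.Quotient.mk_eq_zero, hS] using
            Submodule.mem_span_singleton_self (R := ℝ) (a e)
        have hqrank : finrank ℝ (V ⧸ S) = d - 1 := by
          have h1 := Submodule.finrank_quotient_add_finrank S
          have h2 : finrank ℝ S = 1 := finrank_span_singleton he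
          omega
        have hbspan : span ℝ (b '' ↑F) = ⊤ := by
          have h1 : span ℝ (b '' ↑E) = ⊤ := by
            have : b '' ↑E = S.mkQ '' (a '' ↑E) := by
              rw [Set.image_image]
            rw [this, Submodule.span_image, hspan, Submodule.map_top, Submodule.range_mkQ]
          rw [← hins] at h1
          rw [Finset.coe_insert, Set.image_insert_eq, hbe, Submodule.span_insert_zero] at h1
          exact h1
        -- key equivalence
        have hmain : ∀ I ∈ F.powerset,
            (LinearIndependent ℝ (fun i : ↥(insert e I) => a i.1) ↔
              LinearIndependent ℝ (fun i : I => b i.1)) := by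
          intro I hI
          rw [Finset.mem_powerset] at hI
          have heI : e ∉ I := fun h => heF (hI h)
          constructor
          · intro hA
            rw [indep_iff] at hA ⊢
            intro c hc i hi
            have hπ : S.mkQ (∑ i ∈ I, c i • a i) = 0 := by
              rw [map_sum]
              simpa [hb] using hc
            rw [Submodule.mkQ_apply, Submodule.Quotient.mk_eq_zero] at hπ
            rw [hS, Submodule.mem_span_singleton] at hπ
            obtain ⟨t, ht⟩ := hπ
            have := hA (fun j => if j = e then -t else c j) ?_ i (Finset.mem_insert_of_mem hi)
            · have hie : i ≠ e := fun h => heI (h ▸ hi)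
              simpa only [if_neg hie] using this
            · rw [Finset.sum_insert heI]
              have : ∑ j ∈ I, (if j = e then -t else c j) • a j = ∑ j ∈ I, c j • a j :=
                Finset.sum_congr rfl (fun j hj => by
                  have hje : j ≠ e := fun h => heI (h ▸ hj)
                  rw [if_neg hje])
              rw [this, ← ht]
              simp
          · intro hB
            rw [indep_iff] at hB ⊢
            intro c hc
            rw [Finset.sum_insert heI] at hc
            have hbsum : ∑ i ∈ I, c i • b i = 0 := by
              have := congrArg S.mkQ hc
              rw [map_add, map_sum, map_smul] at this
              have h0 : S.mkQ (a e) = 0 := hbe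
              simp only [h0, smul_zero, zero_add, map_smul, map_zero] at this
              simpa [hb] using this
            have hI0 : ∀ i ∈ I, c i = 0 := hB c hbsum
            have hce : c e = 0 := by
              have hz : ∑ i ∈ I, c i • a i = 0 :=
                Finset.sum_eq_zero (fun i hi => by rw [hI0 i hi, zero_smul])
              rw [hz, add_zero] at hc
              rcases smul_eq_zero.1 hc with h | h
              · exact h
              · exact absurd h he
            intro i hi
            rcases Finset.mem_insert.1 hi with rfl | hi
            · exact hce
            · exact hI0 i hi
        -- rewrite the contraction sum
        have hcontr : ∑ I ∈ F.powerset,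
            (if LinearIndependent ℝ (fun i : ↥(insert e I) => a i.1)
              then (-1 : ℤ) ^ (insert e I).card else 0)
            = -∑ I ∈ F.powerset,
                (if LinearIndependent ℝ (fun i : I => b i.1) then (-1 : ℤ) ^ I.card else 0) := by
          rw [← Finset.sum_neg_distrib]
          apply Finset.sum_congr rfl
          intro I hI
          have heI : e ∉ I := fun h => heF ((Finset.mem_powerset.1 hI) h)
          rw [if_congr (hmain I hI) rfl rfl, Finset.card_insert_of_notMem heI]
          by_cases h : LinearIndependent ℝ (fun i : I => b i.1) <;>
            simp [h, pow_succ]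
        have hdel := IH V ι a F hFk hFspan
        have hcon := IH (V ⧸ S) ι b F hFk hbspan
        rw [hqrank] at hcon
        rw [hsplit, hcontr]
        have habs := abs_add_le
          (∑ I ∈ F.powerset,
            (if LinearIndependent ℝ (fun i : I => a i.1) then (-1 : ℤ) ^ I.card else 0))
          (-∑ I ∈ F.powerset,
            (if LinearIndependent ℝ (fun i : I => b i.1) then (-1 : ℤ) ^ I.card else 0))
        rw [abs_neg] at habs
        refine le_trans habs ?_
        have hpascal : (E.card - 1).choose d = (F.card - 1).choose d + (F.card - 1).choose (d - 1) := by
          obtain ⟨m, hm⟩ : ∃ m, F.card - 1 = m := ⟨_, rfl⟩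
          obtain ⟨d', hd'⟩ : ∃ d', d - 1 = d' := ⟨_, rfl⟩
          have h1 : E.card - 1 = m + 1 := by omega
          have h2 : d = d' + 1 := by omega
          rw [h1, h2, hm, Nat.succ_sub_one, Nat.choose_succ_succ, Nat.add_comm]
        rw [hpascal]
        push_cast
        linarith
      · -- coloop: total sum is zero
        have hzero : ∑ I ∈ F.powerset,
            (if LinearIndependent ℝ (fun i : ↥(insert e I) => a i.1)
              then (-1 : ℤ) ^ (insert e I).card else 0)
            = -∑ I ∈ F.powerset,
                (if LinearIndependent ℝ (fun i : I => a i.1) then (-1 : ℤ) ^ I.card else 0) := by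
          rw [← Finset.sum_neg_distrib]
          apply Finset.sum_congr rfl
          intro I hI
          rw [Finset.mem_powerset] at hI
          have heI : e ∉ I := fun h => heF (hI h)
          have hiff : LinearIndependent ℝ (fun i : ↥(insert e I) => a i.1) ↔
              LinearIndependent ℝ (fun i : I => a i.1) := by
            constructor
            · exact indep_mono a (Finset.subset_insert e I)
            · intro h
              apply indep_insert a heI _ h
              intro hmem
              exact hcol (Submodule.span_mono (Set.image_mono (f := a) (by exact_mod_cast hI)) hmem)
          rw [if_congr hiff rfl rfl, Finset.card_insert_of_notMem heI]
          by_cases h : LinearIndependent ℝ (fun i : I => a i.1) <;>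
            simp [h, pow_succ]
        rw [hsplit, hzero]
        simp only [add_neg_cancel, abs_zero]
        exact_mod_cast Nat.zero_le _

open Classical in
/-- The Euler characteristic of the matroid complex of n nonzero vectors
spanning ℝ^d is at most binom(n-1, d) in absolute value. -/
theorem stmt_0 (n d : ℕ) (a : Fin n → (Fin d → ℝ))
    (hnz : ∀ i, a i ≠ 0)
    (hspan : Submodule.span ℝ (Set.range a) = ⊤) :
    |∑ I ∈ (Finset.univ : Finset (Fin n)).powerset,
        (if LinearIndependent ℝ (fun i : I => a i.1) then (-1 : ℤ) ^ I.card else 0)|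
      ≤ ((n - 1).choose d : ℤ) := by
  have := chi_key n (Fin d → ℝ) (Fin n) a Finset.univ (by simp) (by simpa using hspan)
  rwa [Finset.card_univ, Fintype.card_fin, Module.finrank_fin_fun] at this
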